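/- arXiv:1610.03395 — 8 statements merged into one kernel-verified Lean document; each statement's English description precedes it below -/
import Mathlib

section
/- Let R be a commutative ring and M an R-module. If for every R-module N the natural map M ⊗_R N → Hom_R(Hom_R(M,R), N), sending m ⊗ n to the map (w ↦ w(m)·n), is injective, then M is a flat R-module. -/
open TensorProduct

/-- The natural map `M ⊗ N → Hom(M*, N)`, `m ⊗ n ↦ (w ↦ w m • n)`. -/
noncomputable def natMap (R : Type*) [CommRing R] (M : Type*) [AddCommGroup M] [Module R M]
    (N : Type*) [AddCommGroup N] [Module R N] :
    M ⊗[R] N →ₗ[R] ((M →ₗ[R] R) →ₗ[R] N) :=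
  (dualTensorHom R (Module.Dual R M) N).comp (LinearMap.rTensor N (Module.Dual.eval R M))

lemma natMap_tmul {R : Type u} [CommRing R] {M : Type v} [AddCommGroup M] [Module R M]
    {N : Type*} [AddCommGroup N] [Module R N] (m : M) (n : N) (w : M →ₗ[R] R) :
    natMap R M N (m ⊗ₜ n) w = w m • n := by
  simp [natMap]

/-- Evaluation into the double character module. -/
noncomputable def evalChar (R : Type u) [CommRing R] (M : Type v) [AddCommGroup M]
    [Module R M] : M →ₗ[R] CharacterModule (CharacterModule M) where
  toFun m :=
    { toFun := fun χ => χ m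
      map_zero' := rfl
      map_add' := fun _ _ => rfl }
  map_add' m m' := by ext χ; exact χ.map_add m m'
  map_smul' r m := by ext χ; rfl

theorem stmt0 (R : Type u) [CommRing R] (M : Type v) [AddCommGroup M] [Module R M]
    (h : ∀ (N : Type v) [AddCommGroup N] [Module R N], Function.Injective (natMap R M N)) :
    Module.Flat R M := by
  rw [Module.Flat.iff_lTensor_injective']
  intro I
  rw [injective_iff_map_eq_zero]
  intro x hx
  by_contra hx0
  -- transfer `x` to `I ⊗ M` and pick a character not vanishing on it
  set x' := TensorProduct.comm R M I x with hx'
  have hx'0 : x' ≠ 0 := fun hh => hx0 (by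
    have := congrArg (TensorProduct.comm R M I).symm hh
    simpa [hx'] using this)
  obtain ⟨c, hc⟩ := CharacterModule.exists_character_apply_ne_zero_of_ne_zero hx'0
  -- the corresponding linear map `I → CharacterModule M`
  set φ : I →ₗ[R] CharacterModule M := CharacterModule.curry c with hφ
  set y : M ⊗[R] CharacterModule M := LinearMap.lTensor M φ x with hy
  -- `natMap` kills `y`
  have hnat : ∀ (z : M ⊗[R] I) (w : M →ₗ[R] R),
      natMap R M (CharacterModule M) (LinearMap.lTensor M φ z) w
        = φ (natMap R M I z w) := by
    intro z w
    induction z using TensorProduct.induction_on with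
    | zero => simp
    | tmul m i => simp [natMap_tmul]
    | add a b ha hb => simp [ha, hb]
  have hsub : ∀ (z : M ⊗[R] I) (w : M →ₗ[R] R),
      (I.subtype) (natMap R M I z w)
        = natMap R M R (LinearMap.lTensor M I.subtype z) w := by
    intro z w
    induction z using TensorProduct.induction_on with
    | zero => simp
    | tmul m i => simp [natMap_tmul]
    | add a b ha hb => simpa using congrArg₂ (· + ·) ha hb
  have hyker : natMap R M (CharacterModule M) y = 0 := by
    ext w
    rw [hy, hnat x w]
    have h1 : (I.subtype) (natMap R M I x w) = 0 := by
      rw [hsub x w, hx]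
      simp
    have h2 : natMap R M I x w = 0 := by
      simpa using h1
    simp [h2]
  have hy0 : y = 0 := h (CharacterModule M) (by rw [hyker]; exact (map_zero _).symm)
  -- but a character detects `y ≠ 0`
  have hev : ∀ z : M ⊗[R] I,
      (CharacterModule.homEquiv (evalChar R M)) (LinearMap.lTensor M φ z)
        = c (TensorProduct.comm R M I z) := by
    intro z
    induction z using TensorProduct.induction_on with
    | zero => simp
    | tmul m i =>
      rfl
    | add a b ha hb =>
      simp only [map_add, ha, hb]
  have : c x' = 0 := by
    rw [← hev x, ← hy, hy0, map_zero]
  exact hc this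
end

section
/- Let R be a commutative ring and M an R-module such that for every R-module N the natural map M ⊗_R N → Hom_R(M*, N) is injective. Then the canonical map M → M** is universally injective: for every commutative R-algebra S, the induced map M ⊗_R S → M** ⊗_R S is injective. -/
open TensorProduct

theorem stmt1 (R : Type u) [CommRing R] (M : Type v) [AddCommGroup M] [Module R M]
    (h : ∀ (N : Type v) [AddCommGroup N] [Module R N], Function.Injective (natMap R M N))
    (S : Type v) [CommRing S] [Algebra R S] :
    Function.Injective (LinearMap.rTensor S (Module.Dual.eval R M)) := by
  have := h S
  rw [natMap, LinearMap.coe_comp] at this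
  exact this.of_comp
end

section
/- Let R be a commutative ring and M an R-module such that for every R-module P the natural map M ⊗_R P → Hom_R(M*, P) is injective. Then for every R-module N the natural map M ⊗_R N* → Hom_R(N, M), sending m ⊗ w to the map (n ↦ w(n)·m), is injective. -/
open TensorProduct

section Aux

variable {R : Type*} [CommRing R] {M : Type*} [AddCommGroup M] [Module R M]
  {P : Type*} [AddCommGroup P] [Module R P] {Q : Type*} [AddCommGroup Q] [Module R Q]

lemma natMap_tmul_s2 (m : M) (p : P) (w : Module.Dual R M) :
    natMap R M P (m ⊗ₜ p) w = w m • p := rfl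

lemma natMap_naturality (φ : P →ₗ[R] Q) (x : M ⊗[R] P) :
    natMap R M Q (LinearMap.lTensor M φ x) = φ.comp (natMap R M P x) := by
  induction x using TensorProduct.induction_on with
  | zero => simp
  | tmul m p => ext w; simp [natMap_tmul_s2]
  | add a b ha hb => simp only [map_add, ha, hb, LinearMap.comp_add]

lemma injective_natMap_of_equiv (e : P ≃ₗ[R] Q)
    (hQ : Function.Injective (natMap R M Q)) :
    Function.Injective (natMap R M P) := by
  have hinj : Function.Injective (LinearMap.lTensor M (e : P →ₗ[R] Q)) := by
    intro a b hab
    have h2 : (LinearMap.lTensor M (e.symm : Q →ₗ[R] P)).comp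
        (LinearMap.lTensor M (e : P →ₗ[R] Q)) = LinearMap.id := by
      rw [← LinearMap.lTensor_comp]
      have h3 : (e.symm : Q →ₗ[R] P).comp (e : P →ₗ[R] Q) = LinearMap.id := by
        ext p; simp
      rw [h3, LinearMap.lTensor_id]
    have h4 := congrArg (LinearMap.lTensor M (e.symm : Q →ₗ[R] P)) hab
    rwa [← LinearMap.comp_apply, ← LinearMap.comp_apply, h2, LinearMap.id_apply,
      LinearMap.id_apply] at h4
  intro a b hab
  apply hinj
  apply hQ
  rw [natMap_naturality, natMap_naturality, hab]

end Aux

theorem stmt2 (R : Type u) [CommRing R] (M : Type v) [AddCommGroup M] [Module R M]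
    (h : ∀ (P : Type v) [AddCommGroup P] [Module R P], Function.Injective (natMap R M P))
    (N : Type v) [AddCommGroup N] [Module R N] :
    Function.Injective
      ((dualTensorHom R N M).comp
        (TensorProduct.comm R M (Module.Dual R N)).toLinearMap) := by
  classical
  set D := Module.Dual R N with hD
  refine (injective_iff_map_eq_zero _).mpr fun x hx => ?_
  obtain ⟨S, rfl⟩ := TensorProduct.exists_finset x
  -- From hx : the associated map N → M vanishes
  have hF : ∀ n : N, ∑ i ∈ S, i.2 n • i.1 = 0 := by
    intro n
    have h5 := congrArg (fun g => g n) hx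
    simpa [map_sum] using h5
  -- hence for every functional w on M, the combination ∑ w(mᵢ) • vᵢ vanishes in N*
  have key : ∀ w : Module.Dual R M, ∑ i ∈ S, w i.1 • i.2 = 0 := by
    intro w
    ext n
    have h6 : (∑ i ∈ S, w i.1 • i.2) n = w (∑ i ∈ S, i.2 n • i.1) := by
      rw [map_sum, LinearMap.sum_apply]
      refine Finset.sum_congr rfl fun i _ => ?_
      simp [smul_eq_mul, mul_comm]
    rw [h6, hF n, map_zero]
    simp
  -- the finitely generated data: ψ : (S → R) → N*, r ↦ ∑ rᵢ • vᵢ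
  let ψ : (↥S → R) →ₗ[R] D :=
    ∑ i : ↥S, (LinearMap.proj i : (↥S → R) →ₗ[R] R).smulRight (i : M × D).2
  have hψ : ∀ r : ↥S → R, ψ r = ∑ i : ↥S, r i • (i : M × D).2 := by
    intro r
    simp [ψ]
  set K := LinearMap.ker ψ with hK
  -- P is the (small!) quotient (S → R) / ker ψ
  have small : Small.{v} ((↥S → R) ⧸ K) := by
    set A : Set (N → N) := Set.range (fun r : R => (fun n : N => r • n)) with hA
    have hs : Function.Surjective (fun c : ↥S → ↥A =>
        K.mkQ (fun i => (c i).2.choose)) := by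
      intro p
      obtain ⟨r, rfl⟩ := K.mkQ_surjective p
      refine ⟨fun i => ⟨(fun n => r i • n), ⟨r i, rfl⟩⟩, ?_⟩
      change Submodule.Quotient.mk _ = Submodule.Quotient.mk r
      rw [Submodule.Quotient.eq]
      rw [hK, LinearMap.mem_ker, map_sub]
      rw [sub_eq_zero]
      ext n
      rw [hψ, hψ, LinearMap.sum_apply, LinearMap.sum_apply]
      refine Finset.sum_congr rfl fun i _ => ?_
      have hval : ∀ (a b : R), ((fun n : N => a • n) = fun n : N => b • n) →
          ∀ (v : D) (n : N), a * v n = b * v n := by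
        intro a b hab v n'
        have hab' := congrFun hab n'
        calc a * v n' = v (a • n') := by rw [map_smul]; simp
          _ = v (b • n') := by rw [hab']
          _ = b * v n' := by rw [map_smul]; simp
      simp only [LinearMap.smul_apply, smul_eq_mul]
      exact hval _ _ ((⟨(fun n => r i • n), ⟨r i, rfl⟩⟩ : ↥A)).2.choose_spec _ n
    exact small_of_surjective hs
  have hinjP : Function.Injective (natMap R M ((↥S → R) ⧸ K)) :=
    injective_natMap_of_equiv (Shrink.linearEquiv R _).symm (h (Shrink.{v} _))
  -- the lift of x to M ⊗ P
  set xt : M ⊗[R] ((↥S → R) ⧸ K) :=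
    ∑ i : ↥S, (i : M × D).1 ⊗ₜ K.mkQ (Pi.single i 1) with hxt
  have hxt0 : natMap R M _ xt = 0 := by
    ext w
    have h1 : natMap R M _ xt w = K.mkQ (fun j : ↥S => w (j : M × D).1) := by
      rw [hxt, map_sum, LinearMap.sum_apply]
      have h7 : ∀ i : ↥S, natMap R M _ ((i : M × D).1 ⊗ₜ K.mkQ (Pi.single i 1)) w
          = K.mkQ (Pi.single i (w (i : M × D).1)) := by
        intro i
        rw [natMap_tmul_s2, ← map_smul]
        congr 1
        ext j
        simp [Pi.single_apply]
      rw [Finset.sum_congr rfl fun i _ => h7 i, ← map_sum]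
      congr 1
      exact Finset.univ_sum_single _
    rw [LinearMap.zero_apply, h1, Submodule.mkQ_apply, Submodule.Quotient.mk_eq_zero]
    rw [hK, LinearMap.mem_ker, hψ]
    rw [Finset.sum_coe_sort S (fun i => w i.1 • i.2)]
    exact key w
  have hxtz : xt = 0 := hinjP (by rw [hxt0, map_zero])
  have hfinal : LinearMap.lTensor M (K.liftQ ψ le_rfl) xt = ∑ i ∈ S, i.1 ⊗ₜ[R] i.2 := by
    rw [hxt, map_sum]
    rw [show ∑ i ∈ S, i.1 ⊗ₜ[R] i.2 = ∑ i : ↥S, (i : M × D).1 ⊗ₜ[R] (i : M × D).2 from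
      (Finset.sum_coe_sort S _).symm]
    refine Finset.sum_congr rfl fun i _ => ?_
    rw [LinearMap.lTensor_tmul]
    congr 1
    rw [Submodule.mkQ_apply, Submodule.liftQ_apply, hψ]
    rw [Finset.sum_eq_single i]
    · simp
    · intro j _ hji
      rw [Pi.single_eq_of_ne hji]
      simp
    · intro hi
      exact absurd (Finset.mem_univ i) hi
  rw [← hfinal, hxtz, map_zero]
end

section
/- Let R be a commutative ring, and let f: N → M be an R-linear map that is universally injective (f ⊗ id_S : N ⊗_R S → M ⊗_R S is injective for every commutative R-algebra S). If M is universally torsionless, then N is universally torsionless. -/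
open TensorProduct

namespace Stmt7Aux

variable (R : Type u) [CommRing R] (P : Type v) [AddCommGroup P] [Module R P]

/-- The center of `End R P`: a commutative ring in `Type v` through which the
`R`-action on `P` factors. -/
def Rc : Type v := Subring.center (Module.End R P)

instance : CommRing (Rc R P) :=
  inferInstanceAs (CommRing (Subring.center (Module.End R P)))

/-- The inclusion of the center into `End R P`. -/
def toEnd : Rc R P →+* Module.End R P := (Subring.center (Module.End R P)).subtype

instance : Module (Rc R P) P := Module.compHom P (toEnd R P)

instance : Module (Rc R P)ᵐᵒᵖ P :=
  Module.compHom P ((RingHom.id (Rc R P)).fromOpposite mul_comm)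

instance : IsCentralScalar (Rc R P) P := ⟨fun _ _ => rfl⟩

/-- The trivial square-zero extension `Rc ⊕ P`: a commutative ring in `Type v`. -/
abbrev S : Type v := TrivSqZeroExt (Rc R P) P

/-- The canonical map `R → Rc`. -/
def ρ : R →+* Rc R P :=
  (algebraMap R (Module.End R P)).codRestrict (Subring.center (Module.End R P))
    (fun r => Subring.mem_center_iff.mpr (fun g => (Algebra.commutes r g).symm))

instance : Algebra R (S R P) :=
  ((algebraMap (Rc R P) (S R P)).comp (ρ R P)).toAlgebra

lemma rho_smul (r : R) (p : P) : ρ R P r • p = r • p := rfl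

lemma smul_def' (r : R) (x : S R P) :
    r • x = (TrivSqZeroExt.inl (ρ R P r) : S R P) * x := by
  rw [Algebra.smul_def]; rfl

/-- The inclusion `P → S` as an `R`-linear map. -/
def inc : P →ₗ[R] S R P where
  toFun := TrivSqZeroExt.inr
  map_add' p q := TrivSqZeroExt.inr_add (Rc R P) p q
  map_smul' r p := by
    simp only [RingHom.id_apply, smul_def', TrivSqZeroExt.inl_mul_inr, rho_smul]

/-- The projection `S → P` as an `R`-linear map. -/
def prj : S R P →ₗ[R] P where
  toFun := TrivSqZeroExt.snd
  map_add' _ _ := rfl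
  map_smul' r x := by
    simp only [RingHom.id_apply, smul_def', TrivSqZeroExt.snd_mul, TrivSqZeroExt.snd_inl,
      TrivSqZeroExt.fst_inl, smul_zero, add_zero, op_smul_eq_smul, rho_smul]

lemma prj_comp_inc : prj R P ∘ₗ inc R P = LinearMap.id := by
  ext p; exact TrivSqZeroExt.snd_inr (Rc R P) p

end Stmt7Aux

theorem stmt7 (R : Type u) [CommRing R]
    (M : Type v) [AddCommGroup M] [Module R M]
    (N : Type v) [AddCommGroup N] [Module R N]
    (f : N →ₗ[R] M)
    (hf : ∀ (S : Type v) [CommRing S] [Algebra R S], Function.Injective (f.rTensor S))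
    (hM : ∀ (P : Type v) [AddCommGroup P] [Module R P], Function.Injective (natMap R M P)) :
    ∀ (P : Type v) [AddCommGroup P] [Module R P], Function.Injective (natMap R N P) := by
  intro P _ _
  -- `P → S` splits after tensoring
  have hsplit : (Stmt7Aux.prj R P).lTensor N ∘ₗ (Stmt7Aux.inc R P).lTensor N = LinearMap.id := by
    rw [← LinearMap.lTensor_comp, Stmt7Aux.prj_comp_inc, LinearMap.lTensor_id]
  have hg : Function.Injective ((Stmt7Aux.inc R P).lTensor N) := by
    apply Function.Injective.of_comp (f := ⇑((Stmt7Aux.prj R P).lTensor N))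
    rw [← LinearMap.coe_comp, hsplit]
    exact fun a b h => h
  -- deduce injectivity of `f ⊗ id_P` from that of `f ⊗ id_S`
  have hP : Function.Injective (f.rTensor P) := by
    have h1 : (Stmt7Aux.inc R P).lTensor M ∘ₗ f.rTensor P
        = f.rTensor (Stmt7Aux.S R P) ∘ₗ (Stmt7Aux.inc R P).lTensor N := by
      rw [LinearMap.lTensor_comp_rTensor, LinearMap.rTensor_comp_lTensor]
    have hcomp : Function.Injective
        ⇑(f.rTensor (Stmt7Aux.S R P) ∘ₗ (Stmt7Aux.inc R P).lTensor N) := by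
      rw [LinearMap.coe_comp]; exact (hf (Stmt7Aux.S R P)).comp hg
    rw [← h1, LinearMap.coe_comp] at hcomp
    exact hcomp.of_comp
  -- commuting square with precomposition by the dual map
  have hcomm : (LinearMap.lcomp R P f.dualMap) ∘ₗ natMap R N P
      = natMap R M P ∘ₗ f.rTensor P := by
    ext n p
    rfl
  have hbig : Function.Injective ⇑((LinearMap.lcomp R P f.dualMap) ∘ₗ natMap R N P) := by
    rw [hcomm, LinearMap.coe_comp]
    exact (hM P).comp hP
  rw [LinearMap.coe_comp] at hbig
  exact hbig.of_comp
end

section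
/- Let R be a local commutative ring and M an R-module. If M is the directed union of a family of finitely generated free submodules each of which is a direct summand of M, then M is universally torsionless. -/
open TensorProduct

lemma natMap_apply_tmul (R : Type*) [CommRing R] (M : Type*) [AddCommGroup M] [Module R M]
    (N : Type*) [AddCommGroup N] [Module R N] (m : M) (n : N) (w : M →ₗ[R] R) :
    natMap R M N (m ⊗ₜ n) w = w m • n := by
  simp [natMap]

lemma natMap_injective_of_free (R : Type*) [CommRing R] (M : Type*) [AddCommGroup M]
    [Module R M] [Module.Free R M] [Module.Finite R M]
    (N : Type*) [AddCommGroup N] [Module R N] :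
    Function.Injective (natMap R M N) := by
  unfold natMap
  apply Function.Injective.comp (g := dualTensorHom R (Module.Dual R M) N)
  · rw [← dualTensorHomEquivOfBasis_toLinearMap (Module.Free.chooseBasis R (Module.Dual R M))]
    exact (dualTensorHomEquivOfBasis _).injective
  · rw [← Module.evalEquiv_toLinearMap, ← LinearEquiv.coe_rTensor]
    exact (LinearEquiv.rTensor N (Module.evalEquiv R M)).injective

theorem stmt12 (R : Type u) [CommRing R] [IsLocalRing R]
    (M : Type v) [AddCommGroup M] [Module R M]
    (g : Type v) (L : g → Submodule R M)
    (hdir : Directed (· ≤ ·) L)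
    (hfg : ∀ i, (L i).FG)
    (hfree : ∀ i, Module.Free R (L i))
    (hds : ∀ i, ∃ L' : Submodule R M, IsCompl (L i) L')
    (hsup : ⨆ i, L i = ⊤) :
    ∀ (N : Type v) [AddCommGroup N] [Module R N], Function.Injective (natMap R M N) := by
  intro N _ _
  rw [← LinearMap.ker_eq_bot, LinearMap.ker_eq_bot']
  intro x hx
  cases isEmpty_or_nonempty g with
  | inl h =>
    rw [iSup_of_empty] at hsup
    have hbot : ∀ m : M, m = 0 := fun m => by
      have : m ∈ (⊥ : Submodule R M) := hsup ▸ Submodule.mem_top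
      simpa using this
    have hall : ∀ z : M ⊗[R] N, z = 0 := by
      intro z
      induction z using TensorProduct.induction_on with
      | zero => rfl
      | tmul m n => rw [hbot m, zero_tmul]
      | add a b ha hb => rw [ha, hb, add_zero]
    exact hall x
  | inr h =>
    -- x lies in the image of some L i ⊗ N
    have hrange : ∀ x : M ⊗[R] N, ∃ i, x ∈ LinearMap.range (LinearMap.rTensor N (L i).subtype) := by
      intro x
      induction x using TensorProduct.induction_on with
      | zero => exact ⟨h.some, Submodule.zero_mem _⟩
      | tmul m n =>
        have hm : m ∈ ⨆ i, L i := hsup ▸ Submodule.mem_top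
        obtain ⟨i, hi⟩ := (Submodule.mem_iSup_of_directed L hdir).mp hm
        exact ⟨i, ⟨(⟨m, hi⟩ : L i) ⊗ₜ n, rfl⟩⟩
      | add a b ha hb =>
        obtain ⟨i, yi, hyi⟩ := ha
        obtain ⟨j, yj, hyj⟩ := hb
        obtain ⟨k, hik, hjk⟩ := hdir i j
        have key : ∀ (i' : g) (h' : L i' ≤ L k),
            LinearMap.range (LinearMap.rTensor N (L i').subtype) ≤
            LinearMap.range (LinearMap.rTensor N (L k).subtype) := by
          intro i' h' z hz
          obtain ⟨y, hy⟩ := hz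
          refine ⟨LinearMap.rTensor N (Submodule.inclusion h') y, ?_⟩
          rw [← LinearMap.comp_apply, ← LinearMap.rTensor_comp]
          simpa [Submodule.subtype_comp_inclusion] using hy
        exact ⟨k, Submodule.add_mem _ (key i hik ⟨yi, hyi⟩) (key j hjk ⟨yj, hyj⟩)⟩
    obtain ⟨i, y, hy⟩ := hrange x
    obtain ⟨L', hcompl⟩ := hds i
    have : Module.Finite R (L i) := Module.Finite.iff_fg.mpr (hfg i)
    have := hfree i
    -- show natMap (L i) y = 0
    have hkey : ∀ (z : (L i) ⊗[R] N) (w : (L i) →ₗ[R] R),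
        natMap R (L i) N z w =
        natMap R M N (LinearMap.rTensor N (L i).subtype z)
          (w.comp ((L i).projectionOnto L' hcompl)) := by
      intro z w
      induction z using TensorProduct.induction_on with
      | zero => simp
      | tmul m n =>
        simp only [LinearMap.rTensor_tmul, natMap_apply_tmul, LinearMap.comp_apply,
          Submodule.coe_subtype, Submodule.projectionOnto_apply_left]
      | add a b ha hb => simp [ha, hb]
    have hy0 : natMap R (L i) N y = 0 := by
      ext w
      rw [hkey y w, hy, hx]
      rfl
    have : y = 0 := natMap_injective_of_free R (L i) N (by rw [hy0]; simp)
    rw [← hy, this, map_zero]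
end

section
/- Let R be a noetherian commutative ring and M a flat R-module. Suppose there is a directed family {M_i} of finitely generated submodules of M with M = ⋃_i M_i such that for each i the restriction map Hom_R(M,R) → Hom_R(M_i,R) is surjective. Then M is universally torsionless. -/
open TensorProduct

universe u v

section Transfer

variable {R : Type u} [CommRing R] {M : Type v} [AddCommGroup M] [Module R M]

/-- `ULift M` is a base change of `M` along `R → ULift R`. -/
theorem StmtAux.isBaseChange_ulift :
    IsBaseChange (ULift.{v} R) ((ULift.moduleEquiv.symm : M ≃ₗ[R] ULift.{u} M).toLinearMap) := by
  apply IsBaseChange.of_lift_unique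
  intro Q _ _ _ _ g
  refine ⟨{ toFun := fun x => g x.down
            map_add' := fun a b => g.map_add _ _
            map_smul' := fun s x => ?_ }, ?_, ?_⟩
  · simp only [RingHom.id_apply]
    have h1 : (s • x).down = s.down • x.down := rfl
    show g (s • x).down = _
    rw [h1, g.map_smul, ← algebraMap_smul (ULift.{v} R) s.down (g x.down)]
    congr 1
  · ext m; rfl
  · rintro g' rfl
    ext x
    rfl

theorem StmtAux.flat_ulift [Module.Flat R M] : Module.Flat (ULift.{v} R) (ULift.{u} M) :=
  Module.Flat.isBaseChange (R := R) (S := ULift.{v} R) (M := M) (ULift.{u} M)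
    StmtAux.isBaseChange_ulift

theorem StmtAux.finite_ulift [Module.Finite R M] :
    Module.Finite (ULift.{v} R) (ULift.{u} M) := by
  obtain ⟨n, f, hf⟩ := Module.Finite.exists_fin' R M
  refine Module.Finite.of_surjective (M := Fin n → ULift.{v} R)
    ({ toFun := fun w => ULift.up (f fun j => (w j).down)
       map_add' := fun a b => ULift.ext _ _ (f.map_add (fun j => (a j).down) fun j => (b j).down)
       map_smul' := fun (s : ULift.{v} R) w => ULift.ext _ _ (f.map_smul s.down fun j => (w j).down) } :
      (Fin n → ULift.{v} R) →ₗ[ULift.{v} R] ULift.{u} M)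
    fun m => by
      obtain ⟨w, hw⟩ := hf m.down
      exact ⟨fun j => ULift.up (w j), ULift.ext _ _ hw⟩

theorem StmtAux.fp_ulift [IsNoetherianRing R] [Module.Finite R M] :
    Module.FinitePresentation (ULift.{v} R) (ULift.{u} M) := by
  have : IsNoetherianRing (ULift.{v} R) :=
    isNoetherianRing_of_ringEquiv R (ULift.ringEquiv).symm
  have := StmtAux.finite_ulift (R := R) (M := M)
  exact Module.finitePresentation_of_finite (ULift.{v} R) (ULift.{u} M)

/-- Mixed-universe version: a map from a f.g. module over a noetherian ring (hence f.p.)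
to a flat module factors through a finite free module. -/
theorem StmtAux.factor_mixed [IsNoetherianRing R] [Module.Flat R M]
    {P : Type v} [AddCommGroup P] [Module R P] [Module.Finite R P] (f : P →ₗ[R] M) :
    ∃ (κ : Type (max u v)) (_ : Fintype κ) (h₂ : P →ₗ[R] (κ →₀ R))
      (h₃ : (κ →₀ R) →ₗ[R] M), f = h₃ ∘ₗ h₂ := by
  haveI := StmtAux.flat_ulift (R := R) (M := M)
  haveI := StmtAux.fp_ulift (R := R) (M := P)
  set f' : ULift.{u} P →ₗ[ULift.{v} R] ULift.{u} M :=
    { toFun := fun x => ULift.up (f x.down)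
      map_add' := fun a b => ULift.ext _ _ (f.map_add a.down b.down)
      map_smul' := fun s x => ULift.ext _ _ (f.map_smul s.down x.down) } with hf'
  obtain ⟨κ, hκ, a, y, hay⟩ : ∃ (κ : Type (max u v)) (_ : Fintype κ)
      (a : ULift.{u} P →ₗ[ULift.{v} R] (κ →₀ ULift.{v} R))
      (y : (κ →₀ ULift.{v} R) →ₗ[ULift.{v} R] ULift.{u} M), f' = y ∘ₗ a := by
    obtain ⟨k, a, y, hay⟩ := Module.Flat.exists_factorization_of_finitePresentation f'
    let e := Finsupp.domLCongr (M := ULift.{v} R) (R := ULift.{v} R)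
      (Equiv.ulift.{max u v} (α := Fin k)).symm
    refine ⟨ULift.{max u v} (Fin k), inferInstance, e.toLinearMap ∘ₗ a,
      y ∘ₗ e.symm.toLinearMap, ?_⟩
    rw [hay]
    exact LinearMap.ext fun x => by simp
  refine ⟨κ, hκ,
    { toFun := fun p => Finsupp.mapRange ULift.down rfl (a (ULift.up p))
      map_add' := fun p q => by
        have : (ULift.up (p + q) : ULift.{u} P) = ULift.up p + ULift.up q := rfl
        rw [this, map_add, Finsupp.mapRange_add (fun _ _ => rfl)]
      map_smul' := fun r p => by
        have : (ULift.up (r • p) : ULift.{u} P) = (ULift.up r : ULift.{v} R) • ULift.up p := rfl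
        rw [this, map_smul]
        ext k
        simp only [Finsupp.mapRange_apply, Finsupp.smul_apply, RingHom.id_apply]
        rfl },
    { toFun := fun w => (y (Finsupp.mapRange ULift.up rfl w)).down
      map_add' := fun w₁ w₂ => by
        rw [Finsupp.mapRange_add (fun _ _ => rfl), map_add]; rfl
      map_smul' := fun r w => by
        have : Finsupp.mapRange (ULift.up : R → ULift.{v} R) rfl (r • w)
            = (ULift.up r : ULift.{v} R) • Finsupp.mapRange ULift.up rfl w := by
          ext k
          simp only [Finsupp.mapRange_apply, Finsupp.smul_apply]
          rfl
        rw [this, map_smul]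
        rfl }, ?_⟩
  ext p
  have h1 : Finsupp.mapRange (ULift.up : R → ULift.{v} R) rfl
      (Finsupp.mapRange ULift.down rfl (a (ULift.up p))) = a (ULift.up p) := by
    ext k; simp [Finsupp.mapRange_apply]
  simp only [LinearMap.comp_apply, LinearMap.coe_mk, AddHom.coe_mk]
  rw [h1]
  have := LinearMap.congr_fun hay (ULift.up p)
  rw [hf'] at this
  exact congrArg ULift.down this

end Transfer

section Main

variable {R : Type u} [CommRing R] {M : Type v} [AddCommGroup M] [Module R M]
variable {N : Type v} [AddCommGroup N] [Module R N]

theorem StmtAux.natMap_apply (x : M ⊗[R] N) (w : M →ₗ[R] R) :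
    natMap R M N x w = TensorProduct.lid R N (w.rTensor N x) := by
  induction x using TensorProduct.induction_on with
  | zero => simp
  | tmul m n => simp [natMap]
  | add x y hx hy => simp only [map_add, LinearMap.add_apply, hx, hy]

theorem StmtAux.exists_mem_range {g : Type v} [Nonempty g] (L : g → Submodule R M)
    (hdir : Directed (· ≤ ·) L) (hsup : ⨆ i, L i = ⊤) (x : M ⊗[R] N) :
    ∃ i, x ∈ LinearMap.range (LinearMap.rTensor N (L i).subtype) := by
  induction x using TensorProduct.induction_on with
  | zero => exact ⟨Classical.arbitrary g, 0, map_zero _⟩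
  | tmul m n =>
    have hm : m ∈ ⨆ i, L i := hsup ▸ Submodule.mem_top
    obtain ⟨i, hi⟩ := (Submodule.mem_iSup_of_directed L hdir).mp hm
    exact ⟨i, ⟨⟨m, hi⟩ ⊗ₜ n, rfl⟩⟩
  | add x y hx hy =>
    obtain ⟨i, xi, hxi⟩ := hx
    obtain ⟨j, yj, hyj⟩ := hy
    obtain ⟨k, hik, hjk⟩ := hdir i j
    refine ⟨k, (Submodule.inclusion hik).rTensor N xi + (Submodule.inclusion hjk).rTensor N yj, ?_⟩
    rw [map_add, ← LinearMap.comp_apply, ← LinearMap.rTensor_comp,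
      Submodule.subtype_comp_inclusion, ← LinearMap.comp_apply, ← LinearMap.rTensor_comp,
      Submodule.subtype_comp_inclusion, hxi, hyj]

end Main

theorem stmt13 (R : Type u) [CommRing R] [IsNoetherianRing R]
    (M : Type v) [AddCommGroup M] [Module R M] [Module.Flat R M]
    (g : Type v) (L : g → Submodule R M)
    (hdir : Directed (· ≤ ·) L)
    (hfg : ∀ i, (L i).FG)
    (hsup : ⨆ i, L i = ⊤)
    (hsurj : ∀ i, Function.Surjective fun w : M →ₗ[R] R => w.comp (L i).subtype) :
    ∀ (N : Type v) [AddCommGroup N] [Module R N], Function.Injective (natMap R M N) := by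
  intro N _ _
  have key : ∀ x : M ⊗[R] N, natMap R M N x = 0 → x = 0 := by
    intro x hx
    classical
    cases isEmpty_or_nonempty g with
    | inl hempty =>
      -- `M` is trivial
      have hbot : (⊤ : Submodule R M) = ⊥ := by rw [← hsup, iSup_of_empty]
      have hzero : ∀ m : M, m = 0 := fun m => by
        have : m ∈ (⊥ : Submodule R M) := hbot ▸ Submodule.mem_top
        simpa using this
      have hall : ∀ z : M ⊗[R] N, z = 0 := by
        intro z
        induction z using TensorProduct.induction_on with
        | zero => rfl
        | tmul m n => rw [hzero m, TensorProduct.zero_tmul]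
        | add a b ha hb => rw [ha, hb, add_zero]
      exact hall x
    | inr hne =>
      obtain ⟨i, y, hy⟩ := StmtAux.exists_mem_range L hdir hsup x
      haveI : Module.Finite R (L i) := Module.Finite.iff_fg.mpr (hfg i)
      obtain ⟨κ, hκ, h₂, h₃, hfac⟩ := StmtAux.factor_mixed (L i).subtype
      have hz : h₂.rTensor N y = 0 := by
        apply (TensorProduct.finsuppScalarLeft R N κ).injective
        rw [map_zero]
        ext k
        obtain ⟨w, hw⟩ := hsurj i ((Finsupp.lapply k : (κ →₀ R) →ₗ[R] R) ∘ₗ h₂)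
        have hcomp : (Finsupp.lapply k : (κ →₀ R) →ₗ[R] R) ∘ₗ h₂ = w ∘ₗ (L i).subtype := hw.symm
        rw [TensorProduct.finsuppScalarLeft_apply, ← LinearMap.comp_apply,
          ← LinearMap.rTensor_comp, hcomp, LinearMap.rTensor_comp, LinearMap.comp_apply, hy,
          ← StmtAux.natMap_apply, hx]
        simp
      rw [← hy, hfac, LinearMap.rTensor_comp, LinearMap.comp_apply, hz, map_zero]
  intro a b hab
  have := key (a - b) (by rw [map_sub, hab, sub_self])
  exact sub_eq_zero.mp this
end

section
/- Let R be a Dedekind domain and M an R-module. If M is universally torsionless, then M is the directed union of its finitely generated projective submodules that are direct summands of M. -/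
open TensorProduct
open scoped nonZeroDivisors

universe u v

namespace UTLAux

set_option linter.unusedSectionVars false

variable {R : Type u} [CommRing R] [IsDomain R] [IsDedekindDomain R]
variable {M : Type v} [AddCommGroup M] [Module R M]

/-! ### Torsion-free localizations and projectivity over Dedekind domains -/

lemma locTF (Q : Type v) [AddCommGroup Q] [Module R Q] [NoZeroSMulDivisors R Q]
    (P : Ideal R) [P.IsPrime] :
    NoZeroSMulDivisors (Localization.AtPrime P) (LocalizedModule P.primeCompl Q) := by
  constructor
  intro c x hcx
  by_cases hc : c = 0
  · exact Or.inl hc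
  right
  induction x using LocalizedModule.induction_on with
  | h q s =>
    induction c using Localization.induction_on with
    | H rt =>
      obtain ⟨r, t⟩ := rt
      rw [LocalizedModule.mk_smul_mk] at hcx
      rw [← LocalizedModule.zero_mk (t * s)] at hcx
      obtain ⟨u, hu⟩ := LocalizedModule.mk_eq.mp hcx
      simp only [smul_zero] at hu
      have hr : r ≠ 0 := by
        rintro rfl
        exact hc (by rw [Localization.mk_eq_mk', IsLocalization.mk'_eq_iff_eq_mul]; simp)
      have h1 : (u : R) ≠ 0 := fun h => (u.2 : (u:R) ∈ P.primeCompl) (h ▸ P.zero_mem)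
      have h2 : ((t*s : P.primeCompl) : R) ≠ 0 := fun h =>
        ((t*s).2 : ((t*s:P.primeCompl):R) ∈ P.primeCompl) (h ▸ P.zero_mem)
      have hu0 : ((u : R) * ((t * s : P.primeCompl) : R) * r) ≠ 0 :=
        mul_ne_zero (mul_ne_zero h1 h2) hr
      have : ((u : R) * ((t * s : P.primeCompl) : R) * r) • q = 0 := by
        rw [Submonoid.smul_def, Submonoid.smul_def, smul_smul, smul_smul] at hu
        simpa [mul_assoc] using hu
      rcases smul_eq_zero.mp this with h | h
      · exact absurd h hu0
      · rw [h, LocalizedModule.zero_mk]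

/-- A finitely generated torsion-free module over a Dedekind domain is projective. -/
lemma projOfFGTF (Q : Type v) [AddCommGroup Q] [Module R Q] [Module.Finite R Q]
    [NoZeroSMulDivisors R Q] : Module.Projective R Q := by
  have : Module.FinitePresentation R Q := Module.finitePresentation_of_finite R Q
  apply Module.projective_of_localization_maximal
  intro P hP
  have hPIR : IsPrincipalIdealRing (Localization.AtPrime P) := by
    by_cases hF : IsField R
    · have hb : Function.Bijective (algebraMap R (Localization.AtPrime P)) :=
        hF.localization_map_bijective (fun h0 => (h0 : (0:R) ∈ P.primeCompl) P.zero_mem)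
      have : IsPrincipalIdealRing R := hF.isPrincipalIdealRing
      exact IsPrincipalIdealRing.of_surjective (algebraMap R (Localization.AtPrime P)) hb.2
    · have hbot : P ≠ ⊥ := Ring.ne_bot_of_isMaximal_of_not_isField hP hF
      have : IsDiscreteValuationRing (Localization.AtPrime P) :=
        IsLocalization.AtPrime.isDiscreteValuationRing_of_dedekind_domain R hbot _
      infer_instance
  have : NoZeroSMulDivisors (Localization.AtPrime P) (LocalizedModule P.primeCompl Q) :=
    locTF Q P
  have : Module.Finite (Localization.AtPrime P) (LocalizedModule P.primeCompl Q) :=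
    Module.Finite.of_isLocalizedModule P.primeCompl (LocalizedModule.mkLinearMap P.primeCompl Q)
  have : Module.Free (Localization.AtPrime P) (LocalizedModule P.primeCompl Q) :=
    Module.free_of_finite_type_torsion_free'
  infer_instance

/-! ### Smallness of the base ring -/

lemma smallQuotPow {a : Ideal R} [hsm : Small.{v} (R ⧸ a)] (n : ℕ) :
    Small.{v} (R ⧸ (a ^ n : Ideal R)) := by
  classical
  induction n with
  | zero =>
    have : Subsingleton (R ⧸ (a ^ 0 : Ideal R)) := by
      rw [pow_zero, Ideal.one_eq_top]
      exact Ideal.Quotient.subsingleton_iff.mpr rfl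
    exact small_of_injective (f := fun _ : R ⧸ (a^0 : Ideal R) => PUnit.unit.{v+1})
      (fun _ _ _ => Subsingleton.elim _ _)
  | succ n ih =>
    set X := R ⧸ (a ^ (n+1) : Ideal R) with hX
    have hle : (a ^ (n+1) : Ideal R) ≤ a ^ n := Ideal.pow_le_pow_right (Nat.le_succ n)
    let p : X → R ⧸ (a ^ n : Ideal R) := Ideal.Quotient.factor hle
    obtain ⟨s, hs⟩ : (a ^ n : Ideal R).FG := IsNoetherian.noetherian _
    let φ : ({x // x ∈ s} → R) → X := fun f =>
      Ideal.Quotient.mk _ (∑ i : {x // x ∈ s}, f i * (i : R))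
    let π : ({x // x ∈ s} → R) → ({x // x ∈ s} → R ⧸ a) :=
      fun f i => Ideal.Quotient.mk a (f i)
    have hπ : Function.Surjective π :=
      fun g => ⟨fun i => (Ideal.Quotient.mk_surjective (g i)).choose,
        funext fun i => (Ideal.Quotient.mk_surjective (g i)).choose_spec⟩
    let σ : ({x // x ∈ s} → R ⧸ a) → X := φ ∘ Function.surjInv hπ
    have hφσ : ∀ f : {x // x ∈ s} → R, σ (π f) = φ f := by
      intro f
      have h1 : ∀ i : {x // x ∈ s},
          Ideal.Quotient.mk a (Function.surjInv hπ (π f) i) = Ideal.Quotient.mk a (f i) :=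
        fun i => congrFun (Function.surjInv_eq hπ (π f)) i
      apply Ideal.Quotient.eq.mpr
      rw [← Finset.sum_sub_distrib]
      apply Ideal.sum_mem
      intro i _
      rw [← sub_mul, pow_succ']
      exact Ideal.mul_mem_mul (Ideal.Quotient.eq.mp (h1 i))
        (by rw [← hs]; exact Ideal.subset_span i.2)
    have hK : Small.{v} ↥{z : X | p z = 0} := by
      have hsub : {z : X | p z = 0} ⊆ Set.range σ := by
        rintro z hz
        obtain ⟨w, rfl⟩ := Ideal.Quotient.mk_surjective (I := (a ^ (n+1) : Ideal R)) z
        have hw : w ∈ (a ^ n : Ideal R) := by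
          have heq : p (Ideal.Quotient.mk _ w) = Ideal.Quotient.mk (a ^ n : Ideal R) w :=
            Ideal.Quotient.factor_mk hle w
          rw [Set.mem_setOf_eq, heq] at hz
          exact (Ideal.Quotient.eq_zero_iff_mem).mp hz
        rw [← hs] at hw
        obtain ⟨c, -, hc⟩ := Submodule.mem_span_finset.mp hw
        refine ⟨π (fun i => c i), ?_⟩
        rw [hφσ]
        show Ideal.Quotient.mk _ _ = Ideal.Quotient.mk _ w
        rw [← hc]
        congr 1
        rw [← Finset.sum_attach s (fun x => c x • x)]
        rfl
      have h1 : Small.{v} {x // x ∈ s} := small_map s.equivFin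
      have h2 : Small.{v} ↥(Set.range σ) := small_range σ
      exact small_subset hsub
    have hfib : ∀ y : R ⧸ (a ^ n : Ideal R), Small.{v} {z : X // p z = y} := by
      intro y
      rcases isEmpty_or_nonempty {z : X // p z = y} with hE | ⟨⟨x₀, hx₀⟩⟩
      · exact small_of_injective (f := fun z : {z : X // p z = y} => PUnit.unit.{v+1})
          (fun z => (hE.false z).elim)
      · have hmap : ∀ z : {z : X // p z = y}, ((z : X) - x₀) ∈ {z : X | p z = 0} := by
          rintro ⟨z, hz⟩
          show p (z - x₀) = 0
          show Ideal.Quotient.factor hle _ = 0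
          rw [map_sub]
          rw [show (Ideal.Quotient.factor hle z : R ⧸ (a^n : Ideal R)) = p z from rfl,
            show (Ideal.Quotient.factor hle x₀ : R ⧸ (a^n : Ideal R)) = p x₀ from rfl,
            hz, hx₀, sub_self]
        exact small_of_injective (f := fun z : {z : X // p z = y} =>
            (⟨(z : X) - x₀, hmap z⟩ : ↥{z : X | p z = 0}))
          (fun z₁ z₂ h12 => Subtype.ext (by
            have := congrArg Subtype.val h12
            dsimp at this
            exact sub_left_injective this))
    have : Small.{v} ((y : R ⧸ (a^n : Ideal R)) × {z : X // p z = y}) := small_sigma _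
    exact small_map (Equiv.sigmaFiberEquiv p).symm

lemma smallR (x : M) (hx : x ≠ 0) : Small.{v} R := by
  classical
  set f := LinearMap.toSpanSingleton R M x with hf
  by_cases hk : LinearMap.ker f = ⊥
  · exact small_of_injective (f := f) (LinearMap.ker_eq_bot.mp hk)
  · set a : Ideal R := LinearMap.ker f with hadef
    have : Small.{v} (R ⧸ a) :=
      small_of_injective (LinearMap.quotKerEquivRange f).injective
    have ha : a ≠ ⊤ := by
      intro h
      apply hx
      have h1 : (1 : R) ∈ a := h ▸ Submodule.mem_top
      have h2 : f 1 = 0 := h1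
      rwa [hf, LinearMap.toSpanSingleton_apply, one_smul] at h2
    have hpow : ∀ n, Small.{v} (R ⧸ (a^n : Ideal R)) := fun n => smallQuotPow n
    have hinj : Function.Injective
        (fun r : R => fun n : ℕ => (Ideal.Quotient.mk (a^n : Ideal R) r)) := by
      intro r r' hrr'
      have hmem : r - r' ∈ (⊥ : Ideal R) := by
        rw [← Ideal.iInf_pow_eq_bot_of_isDomain (I := a) ha]
        exact Submodule.mem_iInf _ |>.mpr fun n => Ideal.Quotient.eq.mp (congrFun hrr' n)
      rw [Submodule.mem_bot] at hmem
      exact sub_eq_zero.mp hmem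
    exact small_of_injective hinj

/-! ### Consequences of the universal torsionlessness hypothesis -/

lemma natMap_tmul (N : Type*) [AddCommGroup N] [Module R N] (m : M) (n : N)
    (w : M →ₗ[R] R) : natMap R M N (m ⊗ₜ n) w = w m • n := by
  simp [natMap]

lemma noZeroSMul [Small.{v} R]
    (h : ∀ (N : Type v) [AddCommGroup N] [Module R N], Function.Injective (natMap R M N)) :
    NoZeroSMulDivisors R M := by
  constructor
  intro r x hrx
  by_cases hr : r = 0
  · exact Or.inl hr
  right
  let e := (Shrink.linearEquiv.{v} R R).symm
  have hw : ∀ w : M →ₗ[R] R, w x = 0 := by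
    intro w
    have : r * w x = 0 := by rw [← smul_eq_mul, ← map_smul, hrx, map_zero]
    rcases mul_eq_zero.mp this with h' | h'
    · exact absurd h' hr
    · exact h'
  have h0 : natMap R M (Shrink.{v} R) (x ⊗ₜ e 1) = 0 := by
    ext w
    rw [natMap_tmul, hw w, zero_smul]
    rfl
  have hx0 : x ⊗ₜ[R] (e 1) = 0 := by
    apply h (Shrink.{v} R)
    simp [h0]
  have := congrArg ((TensorProduct.rid R M).toLinearMap ∘ₗ
    (LinearMap.lTensor M e.symm.toLinearMap)) hx0
  simpa using this

lemma mem_evalIdeal_smul [Small.{v} R]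
    (h : ∀ (N : Type v) [AddCommGroup N] [Module R N], Function.Injective (natMap R M N))
    (x : M) :
    x ∈ (LinearMap.range (Module.Dual.eval R M x) : Ideal R) • (⊤ : Submodule R M) := by
  set I : Ideal R := LinearMap.range (Module.Dual.eval R M x) with hI
  have : Small.{v} (R ⧸ I) := small_of_surjective Ideal.Quotient.mk_surjective
  let e := (Shrink.linearEquiv.{v} R (R ⧸ I)).symm
  have hwx : ∀ w : M →ₗ[R] R, w x • (1 : R ⧸ I) = 0 := by
    intro w
    rw [show (1 : R ⧸ I) = Submodule.Quotient.mk (1 : R) from rfl,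
      ← Submodule.Quotient.mk_smul, smul_eq_mul, mul_one]
    rw [Submodule.Quotient.mk_eq_zero]
    exact ⟨w, rfl⟩
  have h0 : natMap R M (Shrink.{v} (R ⧸ I)) (x ⊗ₜ e 1) = 0 := by
    ext w
    rw [natMap_tmul, ← map_smul, hwx w]
    simp
  have hx0 : x ⊗ₜ[R] (e 1) = 0 := by
    apply h _
    simp [h0]
  have := congrArg ((tensorQuotEquivQuotSMul M I).toLinearMap ∘ₗ
    (LinearMap.lTensor M e.symm.toLinearMap)) hx0
  simp only [LinearMap.coe_comp, Function.comp_apply, LinearMap.lTensor_tmul,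
    LinearEquiv.coe_coe, map_zero] at this
  rw [LinearEquiv.symm_apply_apply] at this
  have h1 : (1 : R ⧸ I) = Ideal.Quotient.mk I 1 := rfl
  rw [h1, tensorQuotEquivQuotSMul_tmul_mk, one_smul] at this
  rwa [Submodule.Quotient.mk_eq_zero] at this

lemma exists_dual_family [Small.{v} R]
    (h : ∀ (N : Type v) [AddCommGroup N] [Module R N], Function.Injective (natMap R M N))
    (x : M) :
    ∃ (n : ℕ) (w : Fin n → (M →ₗ[R] R)) (y : Fin n → M), (∑ i, w i x • y i) = x := by
  have hx := mem_evalIdeal_smul h x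
  have key : ∀ m : M, m ∈ (LinearMap.range (Module.Dual.eval R M x) : Ideal R) •
      (⊤ : Submodule R M) →
      ∃ (n : ℕ) (w : Fin n → (M →ₗ[R] R)) (y : Fin n → M), (∑ i, w i x • y i) = m := by
    intro m hm
    refine Submodule.smul_induction_on hm ?_ ?_
    · rintro r ⟨w, rfl⟩ z _
      exact ⟨1, fun _ => w, fun _ => z, by simp⟩
    · rintro m₁ m₂ ⟨n₁, w₁, y₁, h₁⟩ ⟨n₂, w₂, y₂, h₂⟩
      refine ⟨n₁ + n₂, Fin.append w₁ w₂, Fin.append y₁ y₂, ?_⟩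
      rw [Fin.sum_univ_add]
      simp only [Fin.append_left, Fin.append_right]
      rw [h₁, h₂]
  exact key x hx

lemma exists_dual_family_list [Small.{v} R]
    (h : ∀ (N : Type v) [AddCommGroup N] [Module R N], Function.Injective (natMap R M N))
    (xs : List M) :
    ∃ (n : ℕ) (w : Fin n → (M →ₗ[R] R)) (y : Fin n → M),
      ∀ x ∈ xs, (∑ i, w i x • y i) = x := by
  induction xs with
  | nil => exact ⟨0, Fin.elim0, Fin.elim0, by simp⟩
  | cons x xs ih =>
    obtain ⟨n₁, w₁, y₁, h₁⟩ := ih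
    set ε : M →ₗ[R] M := ∑ i, (LinearMap.toSpanSingleton R M (y₁ i)) ∘ₗ (w₁ i) with hε
    have hεapp : ∀ m, ε m = ∑ i, w₁ i m • y₁ i := by
      intro m
      rw [hε]
      simp [LinearMap.sum_apply]
    obtain ⟨n₂, w₂, y₂, h₂⟩ := exists_dual_family h (x - ε x)
    refine ⟨n₁ + n₂, Fin.append w₁ (fun j => (w₂ j) ∘ₗ (LinearMap.id - ε)),
      Fin.append y₁ y₂, ?_⟩
    intro x' hx'
    rw [Fin.sum_univ_add]
    simp only [Fin.append_left, Fin.append_right, LinearMap.comp_apply, LinearMap.sub_apply,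
      LinearMap.id_apply]
    rcases List.mem_cons.mp hx' with rfl | hmem
    · rw [← hεapp x', h₂]
      abel
    · have hfix : ε x' = x' := by rw [hεapp]; exact h₁ x' hmem
      rw [hfix]
      simp only [sub_self, map_zero, zero_smul, Finset.sum_const_zero, add_zero]
      rw [← hεapp, hfix]

/-- For every finitely generated submodule `L` there are maps `θ : M → Rⁿ` and `π : Rⁿ → M`
whose composite fixes `L` pointwise. -/
lemma exists_fix [Small.{v} R]
    (h : ∀ (N : Type v) [AddCommGroup N] [Module R N], Function.Injective (natMap R M N))
    (L : Submodule R M) (hL : L.FG) :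
    ∃ (n : ℕ) (θ : M →ₗ[R] (Fin n → R)) (π : (Fin n → R) →ₗ[R] M),
      ∀ x ∈ L, π (θ x) = x := by
  obtain ⟨s, hs⟩ := hL
  obtain ⟨n, w, y, hwy⟩ := exists_dual_family_list h s.toList
  set θ : M →ₗ[R] (Fin n → R) := LinearMap.pi w with hθ
  set π : (Fin n → R) →ₗ[R] M :=
    ∑ i, (LinearMap.toSpanSingleton R M (y i)) ∘ₗ (LinearMap.proj i) with hπ
  have happ : ∀ m, π (θ m) = ∑ i, w i m • y i := by
    intro m
    rw [hπ]
    simp [LinearMap.sum_apply, hθ]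
  refine ⟨n, θ, π, ?_⟩
  have hle : L ≤ LinearMap.eqLocus (π ∘ₗ θ) LinearMap.id := by
    rw [← hs, Submodule.span_le]
    intro g hg
    show (π ∘ₗ θ) g = LinearMap.id g
    rw [LinearMap.comp_apply, happ, LinearMap.id_apply]
    exact hwy g (by simpa using hg)
  intro x hx
  exact hle hx

/-- Main step: any finitely generated submodule is contained in a finitely generated
projective direct summand. -/
lemma contain [Small.{v} R] [NoZeroSMulDivisors R M]
    (h : ∀ (N : Type v) [AddCommGroup N] [Module R N], Function.Injective (natMap R M N))
    (L : Submodule R M) (hL : L.FG) :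
    ∃ P : Submodule R M,
      (P.FG ∧ Module.Projective R P ∧ ∃ P', IsCompl P P') ∧ L ≤ P := by
  classical
  -- the saturation of L
  set Lsat : Submodule R M := Submodule.comap L.mkQ (Submodule.torsion R (M ⧸ L)) with hLsatdef
  have hLle : L ≤ Lsat := by
    intro x hx
    have h0 : L.mkQ x = 0 := by rw [Submodule.mkQ_apply, Submodule.Quotient.mk_eq_zero]; exact hx
    exact Submodule.mem_comap.mpr (by rw [h0]; exact Submodule.zero_mem _)
  have hsat : ∀ (a : R⁰) (m : M), a • m ∈ Lsat → m ∈ Lsat := by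
    intro a m ham
    rw [Submodule.mem_comap] at ham ⊢
    obtain ⟨b, hb⟩ := (Submodule.mem_torsion_iff _).mp ham
    refine (Submodule.mem_torsion_iff _).mpr ⟨b * a, ?_⟩
    have hb' : (b : R) • L.mkQ ((a : R) • m) = 0 := hb
    show ((b * a : R⁰) : R) • L.mkQ m = 0
    rw [Submonoid.coe_mul, mul_smul, ← map_smul]
    exact hb'
  -- Lsat is finitely generated
  obtain ⟨n₁, θ₁, π₁, hfix₁⟩ := exists_fix h L hL
  have hker : Lsat ⊓ LinearMap.ker θ₁ = ⊥ := by
    rw [eq_bot_iff]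
    rintro x ⟨hx1, hx2⟩
    obtain ⟨a, ha⟩ := (Submodule.mem_torsion_iff _).mp hx1
    have ha' : (a : R) • x ∈ L := by
      have : L.mkQ ((a : R) • x) = 0 := by rw [map_smul]; exact ha
      rwa [Submodule.mkQ_apply, Submodule.Quotient.mk_eq_zero] at this
    have ha := ha'
    have h1 : π₁ (θ₁ ((a : R) • x)) = (a : R) • x := hfix₁ _ ha
    rw [map_smul, (LinearMap.mem_ker).mp hx2, smul_zero, map_zero] at h1
    have : (a : R) • x = 0 := h1.symm
    rcases smul_eq_zero.mp this with h' | h'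
    · exact absurd h' (nonZeroDivisors.coe_ne_zero a)
    · simp [h']
  have hLsatFG : Lsat.FG := by
    apply Submodule.fg_of_fg_map_of_fg_inf_ker θ₁
    · exact IsNoetherian.noetherian _
    · rw [hker]; exact Submodule.fg_bot
  -- second application to Lsat
  obtain ⟨n₂, θ₂, π₂, hfix₂⟩ := exists_fix h Lsat hLsatFG
  set T : Submodule R (Fin n₂ → R) := Submodule.map θ₂ Lsat with hT
  set S : Submodule R (Fin n₂ → R) :=
    Submodule.comap T.mkQ (Submodule.torsion R ((Fin n₂ → R) ⧸ T)) with hS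
  have hTS : T ≤ S := by
    intro v hv
    have h0 : T.mkQ v = 0 := by rw [Submodule.mkQ_apply, Submodule.Quotient.mk_eq_zero]; exact hv
    exact Submodule.mem_comap.mpr (by rw [h0]; exact Submodule.zero_mem _)
  have hπ₂S : ∀ v ∈ S, π₂ v ∈ Lsat := by
    intro v hv
    rw [Submodule.mem_comap] at hv
    obtain ⟨a, ha⟩ := (Submodule.mem_torsion_iff _).mp hv
    have ha' : (a : R) • v ∈ T := by
      have : T.mkQ ((a : R) • v) = 0 := by rw [map_smul]; exact ha
      rwa [Submodule.mkQ_apply, Submodule.Quotient.mk_eq_zero] at this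
    obtain ⟨u, hu, huv⟩ := ha'
    have heq : (a : R) • π₂ v = u := by
      conv_rhs => rw [← hfix₂ u hu]
      rw [huv, map_smul]
    exact hsat a _ (by rw [show a • π₂ v = (a : R) • π₂ v from rfl, heq]; exact hu)
  -- the quotient by S is f.g. torsion-free, hence projective, so S.mkQ splits
  have hQtf : NoZeroSMulDivisors R ((Fin n₂ → R) ⧸ S) := by
    constructor
    intro r q hrq
    by_cases hr : r = 0
    · exact Or.inl hr
    right
    obtain ⟨v, rfl⟩ := S.mkQ_surjective q
    have hrv : r • v ∈ S := by
      have : S.mkQ (r • v) = 0 := by rw [map_smul]; exact hrq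
      rwa [Submodule.mkQ_apply, Submodule.Quotient.mk_eq_zero] at this
    rw [Submodule.mem_comap] at hrv
    obtain ⟨a, ha⟩ := (Submodule.mem_torsion_iff _).mp hrv
    have ha' : (a : R) • r • v ∈ T := by
      have : T.mkQ ((a : R) • r • v) = 0 := by
        rw [map_smul, map_smul]
        have : (a : R) • T.mkQ (r • v) = 0 := ha
        rwa [map_smul] at this
      rwa [Submodule.mkQ_apply, Submodule.Quotient.mk_eq_zero] at this
    have hmem : v ∈ S := by
      rw [Submodule.mem_comap]
      refine (Submodule.mem_torsion_iff _).mpr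
        ⟨a * ⟨r, mem_nonZeroDivisors_of_ne_zero hr⟩, ?_⟩
      show ((a * ⟨r, _⟩ : R⁰) : R) • T.mkQ v = 0
      rw [Submonoid.coe_mul, mul_smul, ← map_smul, ← map_smul]
      rw [Submodule.mkQ_apply, Submodule.Quotient.mk_eq_zero]
      exact ha'
    show S.mkQ v = 0
    rw [Submodule.mkQ_apply, Submodule.Quotient.mk_eq_zero]
    exact hmem
  have hQproj : Module.Projective R ((Fin n₂ → R) ⧸ S) := projOfFGTF _
  obtain ⟨g, hg⟩ := Module.projective_lifting_property S.mkQ LinearMap.id S.mkQ_surjective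
  set e : (Fin n₂ → R) →ₗ[R] (Fin n₂ → R) := LinearMap.id - g ∘ₗ S.mkQ with he
  have he1 : ∀ v, e v ∈ S := by
    intro v
    have : S.mkQ (e v) = 0 := by
      rw [he]
      simp only [LinearMap.sub_apply, LinearMap.id_apply, LinearMap.comp_apply, map_sub]
      have := LinearMap.congr_fun hg (S.mkQ v)
      rw [LinearMap.comp_apply, LinearMap.id_apply] at this
      rw [this, sub_self]
    rwa [← Submodule.Quotient.mk_eq_zero]
  have he2 : ∀ v ∈ S, e v = v := by
    intro v hv
    rw [he]
    simp only [LinearMap.sub_apply, LinearMap.id_apply, LinearMap.comp_apply]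
    rw [show S.mkQ v = 0 from (Submodule.Quotient.mk_eq_zero S).mpr hv, map_zero, sub_zero]
  -- the projection onto Lsat
  set ρ₀ : M →ₗ[R] M := π₂ ∘ₗ (e ∘ₗ θ₂) with hρ₀
  have hrange : ∀ m, ρ₀ m ∈ Lsat := by
    intro m
    exact hπ₂S _ (he1 (θ₂ m))
  have hfixρ : ∀ m ∈ Lsat, ρ₀ m = m := by
    intro m hm
    have h1 : θ₂ m ∈ S := hTS (Submodule.mem_map_of_mem hm)
    rw [hρ₀, LinearMap.comp_apply, LinearMap.comp_apply, he2 _ h1]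
    exact hfix₂ m hm
  set ρ : M →ₗ[R] Lsat := LinearMap.codRestrict Lsat ρ₀ hrange with hρ
  have hproj : ∀ z : Lsat, ρ z = z := by
    intro z
    apply Subtype.ext
    show ρ₀ (z : M) = (z : M)
    exact hfixρ _ z.2
  have hcompl : IsCompl Lsat (LinearMap.ker ρ) := LinearMap.isCompl_of_proj hproj
  -- Lsat is projective
  have hfin : Module.Finite R Lsat := Module.Finite.iff_fg.mpr hLsatFG
  have hprojLsat : Module.Projective R Lsat := by
    have : NoZeroSMulDivisors R Lsat :=
      Subtype.coe_injective.noZeroSMulDivisors _ rfl (fun _ _ => rfl)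
    exact projOfFGTF _
  exact ⟨Lsat, ⟨hLsatFG, hprojLsat, ⟨_, hcompl⟩⟩, hLle⟩

end UTLAux

theorem stmt14 (R : Type u) [CommRing R] [IsDomain R] [IsDedekindDomain R]
    (M : Type v) [AddCommGroup M] [Module R M]
    (h : ∀ (N : Type v) [AddCommGroup N] [Module R N], Function.Injective (natMap R M N)) :
    DirectedOn (· ≤ ·)
      {L : Submodule R M | L.FG ∧ Module.Projective R L ∧ ∃ L', IsCompl L L'} ∧
    sSup {L : Submodule R M | L.FG ∧ Module.Projective R L ∧ ∃ L', IsCompl L L'} = ⊤ := by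
  classical
  set 𝒮 := {L : Submodule R M | L.FG ∧ Module.Projective R L ∧ ∃ L', IsCompl L L'} with h𝒮
  by_cases hM : ∀ x : M, x = 0
  · -- M is trivial
    have hsub : Subsingleton M := ⟨fun a b => by rw [hM a, hM b]⟩
    have hall : ∀ L : Submodule R M, L = ⊤ :=
      fun L => eq_top_iff.mpr (fun x _ => (hM x) ▸ L.zero_mem)
    have hproj : Module.Projective R (⊤ : Submodule R M) := by
      refine Module.Projective.of_split (M := Fin 0 → R) 0 0 ?_
      ext z
      exact (hM _).trans (hM _).symm
    have htop : (⊤ : Submodule R M) ∈ 𝒮 :=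
      ⟨⟨∅, by rw [Finset.coe_empty, Submodule.span_empty]; exact hall ⊥⟩, hproj,
        ⟨⊥, isCompl_top_bot⟩⟩
    constructor
    · intro a _ b _
      exact ⟨⊤, htop, le_top, le_top⟩
    · exact eq_top_iff.mpr (le_sSup htop)
  · push_neg at hM
    obtain ⟨x₀, hx₀⟩ := hM
    have : Small.{v} R := UTLAux.smallR x₀ hx₀
    have : NoZeroSMulDivisors R M := UTLAux.noZeroSMul h
    constructor
    · intro L₁ hL₁ L₂ hL₂
      obtain ⟨P, hP, hle⟩ := UTLAux.contain h (L₁ ⊔ L₂) (Submodule.FG.sup hL₁.1 hL₂.1)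
      exact ⟨P, hP, le_trans le_sup_left hle, le_trans le_sup_right hle⟩
    · rw [eq_top_iff]
      intro x _
      obtain ⟨P, hP, hle⟩ := UTLAux.contain h (Submodule.span R {x})
        (Submodule.fg_span_singleton x)
      have hxP : x ∈ P := hle (Submodule.subset_span (Set.mem_singleton x))
      have hPmem : P ∈ 𝒮 := hP
      exact (le_sSup hPmem) hxP
end

section
/- Let R be a commutative ring and M a universally torsionless R-module. Then M is a trace module: for every m ∈ M, m lies in the submodule M*(m)·M, where M*(m) is the ideal {w(m) : w ∈ Hom_R(M,R)} of R. -/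
open TensorProduct

theorem stmt15 (R : Type u) [CommRing R] (M : Type v) [AddCommGroup M] [Module R M]
    (h : ∀ (N : Type v) [AddCommGroup N] [Module R N], Function.Injective (natMap R M N))
    (m : M) :
    m ∈ (LinearMap.range (Module.Dual.eval R M m)) • (⊤ : Submodule R M) := by
  set I : Ideal R := LinearMap.range (Module.Dual.eval R M m) with hI
  set Q : Submodule R M := I • (⊤ : Submodule R M) with hQ
  -- the Type v module N and the distinguished element n
  have hz : natMap R M (M →ₗ[R] (M ⧸ Q)) (m ⊗ₜ Q.mkQ) = 0 := by
    ext w x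
    simp only [natMap, LinearMap.comp_apply, LinearMap.rTensor_tmul,
      dualTensorHom_apply, LinearMap.smul_apply, Submodule.mkQ_apply,
      LinearMap.zero_apply, Module.Dual.eval_apply]
    rw [← Submodule.Quotient.mk_smul, Submodule.Quotient.mk_eq_zero]
    exact Submodule.smul_mem_smul ⟨w, rfl⟩ trivial
  have h0 : (m ⊗ₜ Q.mkQ : M ⊗[R] (M →ₗ[R] (M ⧸ Q))) = 0 := by
    apply h
    rw [hz, map_zero]
  have := congrArg (TensorProduct.lift (LinearMap.applyₗ (R := R) (M := M) (M₂ := M ⧸ Q))) h0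
  simp only [map_zero, TensorProduct.lift.tmul, LinearMap.applyₗ_apply_apply,
    Submodule.mkQ_apply] at this
  rwa [Submodule.Quotient.mk_eq_zero] at this
end
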